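/- arXiv:1401.0088 — 13 statements merged into one kernel-verified Lean document; each statement's English description precedes it below -/
import Mathlib

section
/- Let R be a commutative ring with 1 and τ a symmetric relation on R#. If a nonunit a ∈ R is τ-unrefinably irreducible, then a is both τ-strongly irreducible and τ-m-irreducible. -/
variable {R : Type*} [CommRing R]

/-- A τ-factorization of `a`: `a = u * (a₁ ⋯ aₙ)` with `u` a unit, each factor a
nonunit, and distinct factors pairwise τ-related. -/
def IsTauFact (τ : R → R → Prop) (a : R) (l : List R) : Prop :=
  l ≠ [] ∧ (∀ b ∈ l, ¬ IsUnit b) ∧ l.Pairwise τ ∧ ∃ u : Rˣ, a = u * l.prod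

/-- `l'` is obtained from `l` by replacing each entry by a τ-factorization of it. -/
def IsRefinement (τ : R → R → Prop) (l l' : List R) : Prop :=
  ∃ L : List (List R), List.Forall₂ (IsTauFact τ) l L ∧ l' = L.flatten

/-- A τ-complete factorization: a τ-factorization admitting no strictly longer
τ-refinement which is itself a τ-factorization. -/
def IsTauComplete (τ : R → R → Prop) (a : R) (l : List R) : Prop :=
  IsTauFact τ a l ∧
    ∀ l', IsRefinement τ l l' → IsTauFact τ a l' → l'.length ≤ l.length

/-- τ is refinable: every τ-refinement of a τ-factorization is a τ-factorization. -/
def Refinable (τ : R → R → Prop) : Prop :=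
  ∀ (a : R) (l l' : List R), IsTauFact τ a l → IsRefinement τ l l' → IsTauFact τ a l'

/-- τ-unrefinably irreducible: a nonunit with only trivial τ-factorizations. -/
def UnrefIrred (τ : R → R → Prop) (a : R) : Prop :=
  ¬ IsUnit a ∧ ∀ l, IsTauFact τ a l → l.length = 1

theorem stmt1 (τ : R → R → Prop) (hsym : Symmetric τ) (a : R) (ha : ¬ IsUnit a)
    (hirr : UnrefIrred τ a) :
    (∀ l, IsTauFact τ a l → ∃ b ∈ l, ∃ u : Rˣ, a = u * b) ∧
    (∀ l, IsTauFact τ a l → ∀ b ∈ l, Ideal.span {a} = Ideal.span {b}) := by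
  have key : ∀ l, IsTauFact τ a l → ∃ b, l = [b] ∧ ∃ u : Rˣ, a = u * b := by
    intro l hl
    have h1 := hirr.2 l hl
    match l, h1 with
    | [b], _ =>
      refine ⟨b, rfl, ?_⟩
      obtain ⟨_, _, _, u, hu⟩ := hl
      exact ⟨u, by simpa using hu⟩
  constructor
  · intro l hl
    obtain ⟨b, rfl, u, hu⟩ := key l hl
    exact ⟨b, by simp, u, hu⟩
  · intro l hl b hb
    obtain ⟨c, rfl, u, hu⟩ := key l hl
    simp only [List.mem_singleton] at hb
    subst hb
    apply le_antisymm
    · exact Ideal.span_singleton_le_span_singleton.mpr ⟨u, by rw [hu]; ring⟩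
    · exact Ideal.span_singleton_le_span_singleton.mpr ⟨(u⁻¹ : Rˣ), by
        rw [hu, mul_comm (u : R), mul_assoc, Units.mul_inv, mul_one]⟩
end

section
/- Let R be a commutative ring with 1 and τ a refinable symmetric relation on R#. If a = λ a₁ ⋯ aₙ is a τ-complete factorization, then each aᵢ is τ-unrefinably irreducible; that is, the factorization is a τ-unrefinably atomic factorization. -/
variable {R : Type*} [CommRing R]

theorem stmt4 (τ : R → R → Prop) (hsym : Symmetric τ) (href : Refinable τ)
    (a : R) (l : List R) (hc : IsTauComplete τ a l) :
    ∀ b ∈ l, ∀ l', IsTauFact τ b l' → l'.length = 1 := by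
  have hsing : ∀ m : List R, (∀ x ∈ m, ¬ IsUnit x) →
      List.Forall₂ (IsTauFact τ) m (m.map fun x => [x]) := by
    intro m
    induction m with
    | nil => intro _; simp
    | cons x xs ih =>
      intro h
      simp only [List.map_cons]
      refine List.Forall₂.cons ?_ (ih fun y hy => h y (List.mem_cons_of_mem _ hy))
      exact ⟨List.cons_ne_nil _ _, by simpa using h x List.mem_cons_self,
        List.pairwise_singleton _ _, ⟨1, by simp⟩⟩
  intro b hb l' hf
  obtain ⟨l₁, l₂, rfl⟩ := List.append_of_mem hb
  have hnu : ∀ x ∈ l₁ ++ b :: l₂, ¬ IsUnit x := hc.1.2.1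
  set L : List (List R) := l₁.map (fun x => [x]) ++ l' :: l₂.map (fun x => [x]) with hL
  have hF : List.Forall₂ (IsTauFact τ) (l₁ ++ b :: l₂) L := by
    refine List.rel_append (hsing l₁ fun x hx => hnu x (by simp [hx])) ?_
    exact List.Forall₂.cons hf (hsing l₂ fun x hx => hnu x (by simp [hx]))
  have hRef : IsRefinement τ (l₁ ++ b :: l₂) L.flatten := ⟨L, hF, rfl⟩
  have hFact : IsTauFact τ a L.flatten := href a _ _ hc.1 hRef
  have hle := hc.2 L.flatten hRef hFact
  have hlen : L.flatten.length = l₁.length + l'.length + l₂.length := by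
    simp [hL, Function.comp_def]; ring
  have hne : l' ≠ [] := hf.1
  have h1 : 1 ≤ l'.length := List.length_pos_iff.mpr hne
  simp only [hlen, List.length_append, List.length_cons] at hle
  omega
end

section
/- Let R be a commutative ring with 1 and τ a refinable symmetric relation on R#. If a = λ a₁ ⋯ aₙ is a τ-complete factorization, then each aᵢ is τ-strongly irreducible. -/
variable {R : Type*} [CommRing R]

lemma singleton_fact (τ : R → R → Prop) {x : R} (hx : ¬ IsUnit x) :
    IsTauFact τ x [x] :=
  ⟨List.cons_ne_nil _ _, by simpa using hx, List.pairwise_singleton _ _, ⟨1, by simp⟩⟩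

theorem stmt5 (τ : R → R → Prop) (hsym : Symmetric τ) (href : Refinable τ)
    (a : R) (l : List R) (hc : IsTauComplete τ a l) :
    ∀ b ∈ l, ∀ l', IsTauFact τ b l' → ∃ c ∈ l', ∃ u : Rˣ, b = u * c := by
  intro b hb l' hl'
  obtain ⟨l₁, l₂, rfl⟩ := List.append_of_mem hb
  obtain ⟨hfact, hcomp⟩ := hc
  have hnu : ∀ x ∈ l₁ ++ b :: l₂, ¬ IsUnit x := hfact.2.1
  -- Build the refinement
  set L : List (List R) := l₁.map (fun x => [x]) ++ l' :: l₂.map (fun x => [x]) with hL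
  have hfa : List.Forall₂ (IsTauFact τ) (l₁ ++ b :: l₂) L := by
    apply List.rel_append
    · rw [List.forall₂_map_right_iff]
      exact List.forall₂_same.2 fun x hx => singleton_fact τ (hnu x (by simp [hx]))
    · exact List.Forall₂.cons hl' (by
        rw [List.forall₂_map_right_iff]
        exact List.forall₂_same.2 fun x hx => singleton_fact τ (hnu x (by simp [hx])))
  have hrefine : IsRefinement τ (l₁ ++ b :: l₂) L.flatten := ⟨L, hfa, rfl⟩
  have hfact' : IsTauFact τ a L.flatten := href a _ _ hfact hrefine
  have hlen := hcomp _ hrefine hfact'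
  have hflat : L.flatten.length = l₁.length + (l'.length + l₂.length) := by
    simp [hL, List.length_flatten, List.map_map, Function.comp_def]
  rw [hflat] at hlen
  simp only [List.length_append, List.length_cons] at hlen
  have hl1 : l'.length ≤ 1 := by omega
  have hne : l' ≠ [] := hl'.1
  have : l'.length = 1 :=
    Nat.le_antisymm hl1 (Nat.succ_le_of_lt (List.length_pos_iff.2 hne))
  obtain ⟨c, rfl⟩ := List.length_eq_one_iff.1 this
  obtain ⟨u, hu⟩ := hl'.2.2.2
  exact ⟨c, by simp, u, by simpa using hu⟩
end

section
/- Let R be a commutative ring with 1 and τ a refinable symmetric relation on R#. If a = λ a₁ ⋯ aₙ is a τ-complete factorization, then each aᵢ is τ-m-irreducible. -/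
variable {R : Type*} [CommRing R]

theorem stmt6 (τ : R → R → Prop) (hsym : Symmetric τ) (href : Refinable τ)
    (a : R) (l : List R) (hc : IsTauComplete τ a l) :
    ∀ b ∈ l, ∀ l', IsTauFact τ b l' →
      ∀ c ∈ l', Ideal.span {b} = Ideal.span {c} := by
  intro b hb l' hfact c hc'
  obtain ⟨s, t, rfl⟩ := List.append_of_mem hb
  -- singleton factorizations for other elements
  have hnonunit : ∀ x ∈ s ++ b :: t, ¬ IsUnit x := hc.1.2.1
  have hsingle : ∀ x ∈ s ++ b :: t, IsTauFact τ x [x] := by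
    intro x hx
    exact ⟨by simp, by simpa using hnonunit x hx, List.pairwise_singleton _ _,
      ⟨1, by simp⟩⟩
  set L : List (List R) := s.map (fun x => [x]) ++ l' :: t.map (fun x => [x]) with hL
  have hforall : List.Forall₂ (IsTauFact τ) (s ++ b :: t) L := by
    refine List.rel_append ?_ (List.Forall₂.cons hfact ?_)
    · rw [List.forall₂_map_right_iff]
      exact List.forall₂_same.2 fun x hx => hsingle x (by simp [hx])
    · rw [List.forall₂_map_right_iff]
      exact List.forall₂_same.2 fun x hx => hsingle x (by simp [hx])
  have hrefine : IsRefinement τ (s ++ b :: t) L.flatten := ⟨L, hforall, rfl⟩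
  have hfact' : IsTauFact τ a L.flatten := href a _ _ hc.1 hrefine
  have hlen : L.flatten.length ≤ (s ++ b :: t).length :=
    hc.2 _ hrefine hfact'
  have key : ∀ u : List R, (List.map (fun x => [x]) u).flatten = u := fun u => by
    induction u with
    | nil => rfl
    | cons x xs ih => simp [ih]
  have hflat : L.flatten = s ++ (l' ++ t) := by
    simp [hL, key]
  have hl'len : l'.length ≤ 1 := by
    rw [hflat] at hlen
    simp at hlen
    omega
  have hne := hfact.1
  have : l'.length = 1 := by
    cases l' with
    | nil => exact absurd rfl hne
    | cons x xs => simp_all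
  obtain ⟨c0, rfl⟩ := List.length_eq_one_iff.mp this
  have hcc : c = c0 := by simpa using hc'
  subst hcc
  obtain ⟨u, hu⟩ := hfact.2.2.2
  simp only [List.prod_cons, List.prod_nil, mul_one] at hu
  rw [hu]
  exact Ideal.span_singleton_mul_left_unit u.isUnit c
end

section
/- Let R be a présimplifiable commutative ring with 1 and τ a refinable symmetric relation on R#. Then a τ-factorization a = λ a₁ ⋯ aₙ is τ-complete if and only if it is a τ-very strongly atomic factorization (every aᵢ is τ-very strongly irreducible). -/
variable {R : Type*} [CommRing R]

private lemma sfact (τ : R → R → Prop) {c : R} (hc : ¬ IsUnit c) : IsTauFact τ c [c] :=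
  ⟨by simp, by simpa, by simp, 1, by simp⟩

private lemma flatten_len (τ : R → R → Prop) : ∀ {l : List R} {L : List (List R)},
    List.Forall₂ (IsTauFact τ) l L →
    (∀ b ∈ l, ∀ l', IsTauFact τ b l' → l'.length = 1) → L.flatten.length = l.length := by
  intro l L h
  induction h with
  | nil => simp
  | @cons a la l' L' hab htail ih =>
    intro hh
    have h1 : la.length = 1 := hh a List.mem_cons_self _ hab
    have h2 := ih fun b hb => hh b (List.mem_cons_of_mem _ hb)
    simp [h1, h2]
    omega

theorem stmt7 (τ : R → R → Prop) (hsym : Symmetric τ) (href : Refinable τ)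
    (hpre : ∀ x y : R, x = x * y → x = 0 ∨ IsUnit y)
    (a : R) (l : List R) (hf : IsTauFact τ a l) :
    IsTauComplete τ a l ↔
      ∀ b ∈ l, (b = 0 ∨ ∀ r : R, b = r * b → IsUnit r) ∧
        ∀ l', IsTauFact τ b l' → l'.length = 1 := by
  constructor
  · rintro ⟨-, hcomp⟩ b hb
    constructor
    · by_cases hb0 : b = 0
      · exact Or.inl hb0
      · refine Or.inr fun r hr => ?_
        rcases hpre b r (by rw [mul_comm]; exact hr) with h0 | hu
        · exact absurd h0 hb0
        · exact hu
    · intro l'' hl''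
      obtain ⟨s, t, rfl⟩ := List.append_of_mem hb
      set L : List (List R) := s.map (fun c => [c]) ++ l'' :: t.map (fun c => [c]) with hL
      have hnu := hf.2.1
      have hF : List.Forall₂ (IsTauFact τ) (s ++ b :: t) L := by
        apply List.rel_append
        · rw [List.forall₂_map_right_iff]
          refine List.forall₂_same.mpr fun c hc => sfact τ ?_
          exact hnu c (by simp [hc])
        · refine List.Forall₂.cons hl'' ?_
          rw [List.forall₂_map_right_iff]
          refine List.forall₂_same.mpr fun c hc => sfact τ ?_
          exact hnu c (by simp [hc])
      have hrefn : IsRefinement τ (s ++ b :: t) L.flatten := ⟨L, hF, rfl⟩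
      have hfact := href _ _ _ hf hrefn
      have hlen := hcomp _ hrefn hfact
      have h1 : L.flatten.length = s.length + (l''.length + t.length) := by
        simp [hL, Function.comp_def, List.map_const', List.sum_replicate, smul_eq_mul]
      have h2 : 1 ≤ l''.length := List.length_pos_iff.mpr hl''.1
      simp only [h1, List.length_append, List.length_cons] at hlen
      omega
  · intro h
    refine ⟨hf, ?_⟩
    rintro l' ⟨L, hF, rfl⟩ -
    exact le_of_eq (flatten_len τ hF fun b hb => (h b hb).2)
end

section
/- Let R be a commutative ring with 1 and τ a refinable symmetric relation on R#. If a = λ a₁ ⋯ aₙ is a τ-factorization and each aᵢ = λᵢ b_{i1} ⋯ b_{im_i} is a τ-complete factorization, then the refined factorization a = (λλ₁⋯λₙ) b_{11} ⋯ b_{1m₁} ⋯ b_{n1} ⋯ b_{nm_n} is a τ-complete factorization. -/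
variable {R : Type*} [CommRing R]

lemma forall₂_append_split {α β : Type*} {P : α → β → Prop} :
    ∀ {l₁ l₂ : List α} {m : List β}, List.Forall₂ P (l₁ ++ l₂) m →
      ∃ m₁ m₂, List.Forall₂ P l₁ m₁ ∧ List.Forall₂ P l₂ m₂ ∧ m = m₁ ++ m₂ := by
  intro l₁
  induction l₁ with
  | nil => intro l₂ m h; exact ⟨[], m, List.Forall₂.nil, h, rfl⟩
  | cons x xs ih =>
    intro l₂ m h
    cases h with
    | cons hx hrest =>
      obtain ⟨m₁, m₂, h₁, h₂, rfl⟩ := ih hrest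
      exact ⟨_ :: m₁, m₂, List.Forall₂.cons hx h₁, h₂, rfl⟩

lemma key (τ : R → R → Prop) (href : Refinable τ) :
    ∀ {l : List R} {L : List (List R)}, List.Forall₂ (IsTauComplete τ) l L →
      ∀ L' : List (List R), List.Forall₂ (IsTauFact τ) L.flatten L' →
        L'.flatten.length ≤ L.flatten.length := by
  intro l L hL
  induction hL with
  | nil =>
    intro L' h
    have h' : List.Forall₂ (IsTauFact τ) [] L' := by simpa using h
    have : L' = [] := List.forall₂_nil_left_iff.mp h'
    simp [this]
  | cons hx hrest ih =>
    intro L' h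
    rename_i b Lb lt Lt
    simp only [List.flatten_cons] at h ⊢
    obtain ⟨m₁, m₂, h₁, h₂, rfl⟩ := forall₂_append_split h
    have hfact : IsTauFact τ b m₁.flatten :=
      href b Lb m₁.flatten hx.1 ⟨m₁, h₁, rfl⟩
    have := hx.2 m₁.flatten ⟨m₁, h₁, rfl⟩ hfact
    have := ih m₂ h₂
    simp only [List.flatten_append, List.length_append]
    omega

theorem stmt8 (τ : R → R → Prop) (hsym : Symmetric τ) (href : Refinable τ)
    (a : R) (l : List R) (L : List (List R)) (hf : IsTauFact τ a l)
    (hL : List.Forall₂ (IsTauComplete τ) l L) :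
    IsTauComplete τ a L.flatten := by
  have hLf : List.Forall₂ (IsTauFact τ) l L := hL.imp fun _ _ h => h.1
  constructor
  · exact href a l L.flatten hf ⟨L, hLf, rfl⟩
  · rintro l' ⟨L', hL', rfl⟩ _
    exact key τ href hL L' hL'
end

section
/- Let R be a commutative ring with 1 and τ a symmetric relation on R#. If R is τ-unrefinably atomic, then R is τ-complete (every nonunit has a τ-complete factorization). -/
variable {R : Type*} [CommRing R]

lemma flatten_len_aux (τ : R → R → Prop) :
    ∀ {l : List R} {L : List (List R)}, List.Forall₂ (IsTauFact τ) l L →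
      (∀ b ∈ l, UnrefIrred τ b) → L.flatten.length = l.length := by
  intro l L hf
  induction hf with
  | nil => simp
  | @cons x y l L hab hrest ih =>
      intro hirr
      have h1 : y.length = 1 := (hirr x List.mem_cons_self).2 y hab
      simp [h1, ih (fun b hb => hirr b (List.mem_cons_of_mem _ hb)), Nat.add_comm]

theorem stmt9 (τ : R → R → Prop) (hsym : Symmetric τ)
    (h : ∀ a : R, ¬ IsUnit a →
      ∃ l, IsTauFact τ a l ∧ ∀ b ∈ l, UnrefIrred τ b) :
    ∀ a : R, ¬ IsUnit a → ∃ l, IsTauComplete τ a l := by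
  intro a ha
  obtain ⟨l, hl, hirr⟩ := h a ha
  refine ⟨l, hl, ?_⟩
  rintro l' ⟨L, hf, rfl⟩ _
  exact (flatten_len_aux τ hf hirr).le
end

section
/- Let R be a commutative ring with 1 and τ a refinable symmetric relation on R#. If every τ-factorization of every nonunit can be τ-refined to a τ-complete factorization (R is τ-completable), then R is τ-unrefinably atomicable: every τ-factorization can be τ-refined to a factorization all of whose factors are τ-unrefinably irreducible. -/
variable {R : Type*} [CommRing R]

theorem stmt10 (τ : R → R → Prop) (hsym : Symmetric τ) (href : Refinable τ)
    (h : ∀ (a : R) (l : List R), IsTauFact τ a l →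
      ∃ l', IsRefinement τ l l' ∧ IsTauComplete τ a l') :
    ∀ (a : R) (l : List R), IsTauFact τ a l →
      ∃ l', IsRefinement τ l l' ∧ IsTauFact τ a l' ∧
        ∀ b ∈ l', UnrefIrred τ b := by
  have singl : ∀ x : R, ¬ IsUnit x → IsTauFact τ x [x] := by
    intro x hx
    exact ⟨List.cons_ne_nil _ _, by simpa using hx, List.pairwise_singleton _ _,
      1, by simp⟩
  intro a l hl
  obtain ⟨l', hrefine, hcomp⟩ := h a l hl
  refine ⟨l', hrefine, hcomp.1, ?_⟩
  intro b hb
  have hbnu : ¬ IsUnit b := hcomp.1.2.1 b hb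
  refine ⟨hbnu, ?_⟩
  intro m hm
  by_contra hlen
  have hm2 : 2 ≤ m.length := by
    have := hm.1
    rcases m with _ | ⟨x, _ | ⟨y, t⟩⟩
    · exact absurd rfl this
    · exact absurd rfl hlen
    · simp
  obtain ⟨s, t, rfl⟩ := List.append_of_mem hb
  -- build the refinement of l' replacing b by m
  have hfs : List.Forall₂ (IsTauFact τ) s (s.map (fun x => [x])) := by
    rw [List.forall₂_map_right_iff]
    refine List.forall₂_same.2 ?_
    intro x hx
    exact singl x (hcomp.1.2.1 x (by simp [hx]))
  have hft : List.Forall₂ (IsTauFact τ) t (t.map (fun x => [x])) := by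
    rw [List.forall₂_map_right_iff]
    refine List.forall₂_same.2 ?_
    intro x hx
    exact singl x (hcomp.1.2.1 x (by simp [hx]))
  have hF : List.Forall₂ (IsTauFact τ) (s ++ b :: t)
      (s.map (fun x => [x]) ++ m :: t.map (fun x => [x])) :=
    List.rel_append hfs (List.Forall₂.cons hm hft)
  have hrefn : IsRefinement τ (s ++ b :: t) (s ++ m ++ t) := by
    refine ⟨s.map (fun x => [x]) ++ m :: t.map (fun x => [x]), hF, ?_⟩
    have hflat : ∀ u : List R, (u.map fun x => [x]).flatten = u := by
      intro u; induction u <;> simp [*]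
    simp [List.flatten_append, List.flatten, hflat]
  have hfact : IsTauFact τ a (s ++ m ++ t) := href a _ _ hcomp.1 hrefn
  have hle := hcomp.2 _ hrefn hfact
  simp only [List.length_append, List.length_cons] at hle
  omega
end

section
/- Let R be a commutative ring with 1 and τ a symmetric relation on R#. If R is a τ-complete-β-FFR (β any of the associate relations), then R is a τ-complete-BFR: for each nonunit a there is N(a) ∈ ℕ bounding the length of every τ-complete factorization of a. -/
variable {R : Type*} [CommRing R]

/-- Two factorizations agree up to reordering and associates. -/
def AssocListEq (l m : List R) : Prop :=
  ∃ m' : List R, m.Perm m' ∧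
    List.Forall₂ (fun x y : R => Ideal.span {x} = Ideal.span {y}) l m'

theorem stmt13 (τ : R → R → Prop) (hsym : Symmetric τ)
    (hffr : ∀ a : R, ¬ IsUnit a → ∃ S : Set (List R), S.Finite ∧
      ∀ l, IsTauComplete τ a l → ∃ m ∈ S, AssocListEq l m) :
    ∀ a : R, ¬ IsUnit a → ∃ N : ℕ, ∀ l, IsTauComplete τ a l → l.length ≤ N := by
  intro a ha
  obtain ⟨S, hfin, h⟩ := hffr a ha
  refine ⟨hfin.toFinset.sup List.length, ?_⟩
  intro l hl
  obtain ⟨m, hmS, m', hperm, hf⟩ := h l hl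
  have h1 : l.length = m'.length := List.Forall₂.length_eq hf
  have h2 : m'.length = m.length := (hperm.length_eq).symm
  rw [h1, h2]
  exact Finset.le_sup (hfin.mem_toFinset.mpr hmS)
end

section
/- Let R be a commutative ring with 1 and τ a refinable symmetric relation on R#, and suppose R is τ-complete (every nonunit has a τ-complete factorization). If R is a τ-complete-BFR, then R satisfies τ-ACCP. -/
variable {R : Type*} [CommRing R]

section Aux

variable {τ : R → R → Prop}

lemma taufact_nonunit {a : R} {l : List R} (h : IsTauFact τ a l) : ¬ IsUnit a := by
  obtain ⟨hne, hnu, -, u, rfl⟩ := h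
  intro hu
  have hprod : IsUnit l.prod := isUnit_of_mul_isUnit_right hu
  obtain ⟨b, t, rfl⟩ := List.exists_cons_of_ne_nil hne
  exact hnu b (by simp) (isUnit_of_dvd_unit (List.dvd_prod (by simp)) hprod)

lemma taufact_singleton {b : R} (hb : ¬ IsUnit b) : IsTauFact τ b [b] :=
  ⟨by simp, by simpa using hb, by simp, 1, by simp⟩

lemma forall2_map_self {P : R → List R → Prop} {f : R → List R} :
    ∀ {l : List R}, (∀ b ∈ l, P b (f b)) → List.Forall₂ P l (l.map f)
  | [], _ => List.Forall₂.nil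
  | b :: t, h =>
    List.Forall₂.cons (h b (by simp)) (forall2_map_self fun x hx => h x (by simp [hx]))

lemma flatten_map_singleton : ∀ (l : List R), (l.map fun b => [b]).flatten = l
  | [] => rfl
  | b :: t => by simp [flatten_map_singleton t]

lemma prod_aux : ∀ {l : List R} {M : List (List R)},
    List.Forall₂ (fun b m => ∃ u : Rˣ, b = (u : R) * m.prod) l M →
    ∃ u : Rˣ, l.prod = u * M.flatten.prod := by
  intro l M h
  induction h with
  | nil => exact ⟨1, by simp⟩
  | @cons b m l M hbm _ ih =>
    obtain ⟨u, hu⟩ := hbm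
    obtain ⟨v, hv⟩ := ih
    exact ⟨u * v, by simp [hu, hv, List.prod_append]; ring⟩

lemma len_aux : ∀ {l : List R} {M : List (List R)},
    List.Forall₂ (fun _ m => m ≠ []) l M → l.length ≤ M.flatten.length := by
  intro l M h
  induction h with
  | nil => simp
  | @cons b m l M hbm _ ih =>
    have : 1 ≤ m.length := List.length_pos_iff.mpr hbm
    simp only [List.flatten_cons, List.length_append, List.length_cons]
    omega

lemma split_aux {P : R → List R → Prop} :
    ∀ (c : List R) {rest : List R} {M : List (List R)},
      List.Forall₂ P (c ++ rest) M →
      ∃ M₁ M₂, M = M₁ ++ M₂ ∧ List.Forall₂ P c M₁ ∧ List.Forall₂ P rest M₂ := by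
  intro c
  induction c with
  | nil => exact fun h => ⟨[], _, rfl, List.Forall₂.nil, h⟩
  | cons x xs ih =>
    intro rest M h
    cases h with
    | cons hx hxs =>
      obtain ⟨M₁, M₂, rfl, h₁, h₂⟩ := ih hxs
      exact ⟨_ :: M₁, M₂, rfl, List.Forall₂.cons hx h₁, h₂⟩

lemma split_flatten {P : R → List R → Prop} :
    ∀ (C : List (List R)) {M : List (List R)},
      List.Forall₂ P C.flatten M →
      ∃ Ms : List (List (List R)), List.Forall₂ (List.Forall₂ P) C Ms ∧ M = Ms.flatten := by
  intro C
  induction C with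
  | nil =>
    intro M h
    cases h
    exact ⟨[], List.Forall₂.nil, rfl⟩
  | cons c C ih =>
    intro M h
    rw [List.flatten_cons] at h
    obtain ⟨M₁, M₂, rfl, h₁, h₂⟩ := split_aux c h
    obtain ⟨Ms, hMs, rfl⟩ := ih h₂
    exact ⟨M₁ :: Ms, List.Forall₂.cons h₁ hMs, rfl⟩

/-- Key counting lemma: blockwise refinement of complete factorizations can't grow. -/
lemma key_aux : ∀ {l : List R} {C Ms : List (List R)} {MS : List (List (List R))},
    List.Forall₂ (fun b c => IsTauComplete τ b c) l C →
    List.Forall₂ (List.Forall₂ (IsTauFact τ)) C MS →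
    Ms = MS.flatten →
    (∀ x ∈ (Ms.flatten : List R), ¬ IsUnit x) → (Ms.flatten).Pairwise τ →
    Ms.flatten.length ≤ C.flatten.length := by
  intro l C Ms MS h1 h2 hMs hnu hpw
  induction h1 generalizing MS Ms with
  | nil => cases h2; simp [hMs]
  | @cons b c l C hbc _ ih =>
    cases h2 with
    | cons hcM h2' =>
      rename_i Mc MS'
      subst hMs
      simp only [List.flatten_cons, List.flatten_append] at hnu hpw ⊢
      have hpair := List.pairwise_append.mp hpw
      have hb1 : IsTauFact τ b Mc.flatten := by
        refine ⟨?_, ?_, hpair.1, ?_⟩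
        · have hlen : c.length ≤ Mc.flatten.length :=
            len_aux (hcM.imp fun _ _ hx => hx.1)
          have : c ≠ [] := hbc.1.1
          have : 0 < c.length := List.length_pos_iff.mpr this
          intro hnil
          rw [hnil] at hlen
          simp only [List.length_nil] at hlen
          omega
        · intro x hx; exact hnu x (by simp [hx])
        · obtain ⟨u, hu⟩ := prod_aux (hcM.imp fun _ _ hx => hx.2.2.2)
          obtain ⟨v, hv⟩ := hbc.1.2.2.2
          exact ⟨v * u, by rw [hv, hu]; simp [mul_assoc]⟩
      have hle1 : Mc.flatten.length ≤ c.length :=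
        hbc.2 Mc.flatten ⟨Mc, hcM, rfl⟩ hb1
      have hle2 := ih h2' rfl (fun x hx => hnu x (by simp [hx])) hpair.2.1
      simp only [List.length_append]
      omega

/-- Every τ-factorization length of a nonunit is bounded. -/
lemma bound_all (href : Refinable τ)
    (hcompl : ∀ a : R, ¬ IsUnit a → ∃ l, IsTauComplete τ a l)
    (hbfr : ∀ a : R, ¬ IsUnit a → ∃ N : ℕ, ∀ l, IsTauComplete τ a l → l.length ≤ N)
    (a : R) (ha : ¬ IsUnit a) :
    ∃ N : ℕ, ∀ l, IsTauFact τ a l → l.length ≤ N := by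
  obtain ⟨N, hN⟩ := hbfr a ha
  refine ⟨N, fun l hl => ?_⟩
  classical
  set f : R → List R := fun b =>
    if h : ¬ IsUnit b then Classical.choose (hcompl b h) else [b] with hf
  have hfc : ∀ b ∈ l, IsTauComplete τ b (f b) := by
    intro b hb
    have hb' : ¬ IsUnit b := hl.2.1 b hb
    simp only [hf, dif_pos hb']
    exact Classical.choose_spec (hcompl b hb')
  have hF2 : List.Forall₂ (fun b c => IsTauComplete τ b c) l (l.map f) :=
    forall2_map_self hfc
  set C := l.map f with hC
  have href2 : IsRefinement τ l C.flatten := ⟨C, hF2.imp fun _ _ hx => hx.1, rfl⟩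
  have hFfact : IsTauFact τ a C.flatten := href a l C.flatten hl href2
  have hlen : l.length ≤ C.flatten.length :=
    len_aux ((hF2.imp fun _ _ hx => hx.1).imp fun _ _ hx => hx.1)
  have hFcompl : IsTauComplete τ a C.flatten := by
    refine ⟨hFfact, ?_⟩
    rintro l'' ⟨M, hM, rfl⟩ hfact''
    obtain ⟨Ms, hMs, rfl⟩ := split_flatten C hM
    exact key_aux hF2 hMs rfl hfact''.2.1 hfact''.2.2.1
  exact le_trans hlen (hN _ hFcompl)

end Aux

theorem stmt14 (τ : R → R → Prop) (hsym : Symmetric τ) (href : Refinable τ)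
    (hcompl : ∀ a : R, ¬ IsUnit a → ∃ l, IsTauComplete τ a l)
    (hbfr : ∀ a : R, ¬ IsUnit a → ∃ N : ℕ, ∀ l, IsTauComplete τ a l → l.length ≤ N) :
    ∀ a : ℕ → R,
      (∀ i, Ideal.span {a i} ≤ Ideal.span {a (i + 1)}) →
      (∀ i, ∃ l, IsTauFact τ (a i) l ∧ a (i + 1) ∈ l) →
      ∃ N : ℕ, ∀ i, N ≤ i → Ideal.span {a i} = Ideal.span {a N} := by
  intro a hle hfac
  classical
  -- every a i is a nonunit
  have hnu : ∀ i, ¬ IsUnit (a i) := fun i =>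
    taufact_nonunit (hfac i).choose_spec.1
  obtain ⟨N, hN⟩ := bound_all href hcompl hbfr (a 0) (hnu 0)
  -- strict step predicate and its count
  set P : ℕ → Prop := fun i => ¬ (Ideal.span {a (i + 1)} : Ideal R) ≤ Ideal.span {a i}
    with hP
  set s : ℕ → ℕ := fun n => ((Finset.range n).filter P).card with hs
  have hs_mono : Monotone s := fun m n hmn =>
    Finset.card_le_card (Finset.filter_subset_filter _ (by simpa using hmn))
  have hs_succ : ∀ n, s (n + 1) = if P n then s n + 1 else s n := by
    intro n
    simp only [hs, Finset.range_add_one, Finset.filter_insert]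
    split
    · rw [Finset.card_insert_of_notMem (by simp)]
    · rfl
  -- growth claim
  have claim : ∀ n, ∃ l, IsTauFact τ (a 0) l ∧ a n ∈ l ∧ s n + 1 ≤ l.length := by
    intro n
    induction n with
    | zero => exact ⟨[a 0], taufact_singleton (hnu 0), by simp, by simp [hs]⟩
    | succ n ih =>
      obtain ⟨l, hlf, hmem, hlen⟩ := ih
      obtain ⟨m, hmf, hmmem⟩ := hfac n
      obtain ⟨l₁, l₂, rfl⟩ := List.append_of_mem hmem
      have hmne : m ≠ [] := hmf.1
      -- the refinement
      set L : List (List R) :=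
        (l₁.map fun b => [b]) ++ m :: (l₂.map fun b => [b]) with hL
      have hF2 : List.Forall₂ (IsTauFact τ) (l₁ ++ a n :: l₂) L := by
        refine List.rel_append ?_ (List.Forall₂.cons hmf ?_)
        · exact forall2_map_self fun b hb =>
            taufact_singleton (hlf.2.1 b (by simp [hb]))
        · exact forall2_map_self fun b hb =>
            taufact_singleton (hlf.2.1 b (by simp [hb]))
      have hLflat : L.flatten = l₁ ++ m ++ l₂ := by
        simp [hL, List.flatten_append, flatten_map_singleton]
      have hfact' : IsTauFact τ (a 0) (l₁ ++ m ++ l₂) := by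
        rw [← hLflat]
        exact href _ _ _ hlf ⟨L, hF2, rfl⟩
      refine ⟨l₁ ++ m ++ l₂, hfact', by simp [hmmem], ?_⟩
      have hlens : (l₁ ++ m ++ l₂).length = l₁.length + m.length + l₂.length := by
        rw [List.length_append, List.length_append]
      have holdlen : (l₁ ++ a n :: l₂).length = l₁.length + 1 + l₂.length := by
        rw [List.length_append, List.length_cons]; omega
      by_cases hPn : P n
      · -- strict step: m has length ≥ 2
        have hm2 : 2 ≤ m.length := by
          rcases Nat.lt_or_ge m.length 2 with h2 | h2
          · interval_cases h : m.length
            · exact absurd (List.length_eq_zero_iff.mp h) hmne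
            · obtain ⟨b, rfl⟩ := List.length_eq_one_iff.mp h
              have hb : a (n + 1) = b := by simpa using hmmem
              subst hb
              obtain ⟨u, hu⟩ := hmf.2.2.2
              exfalso
              apply hPn
              rw [Ideal.span_singleton_le_span_singleton]
              exact ⟨((u⁻¹ : Rˣ) : R), by
                rw [hu, List.prod_singleton, mul_comm (u : R), mul_assoc,
                  Units.mul_inv, mul_one]⟩
          · exact h2
        rw [hs_succ n, if_pos hPn]
        rw [holdlen] at hlen
        omega
      · rw [hs_succ n, if_neg hPn]
        have : 1 ≤ m.length := List.length_pos_iff.mpr hmne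
        rw [holdlen] at hlen
        omega
  -- s is bounded by N
  have hsb : ∀ n, s n + 1 ≤ N := by
    intro n
    obtain ⟨l, hlf, -, hlen⟩ := claim n
    exact le_trans hlen (hN l hlf)
  -- only finitely many strict steps
  have hstab : ∃ M, ∀ i, M ≤ i → ¬ P i := by
    by_contra h
    push_neg at h
    have hub : ∀ k, ∃ n, k ≤ s n := by
      intro k
      induction k with
      | zero => exact ⟨0, Nat.zero_le _⟩
      | succ k ih =>
        obtain ⟨n, hn⟩ := ih
        obtain ⟨i, hin, hPi⟩ := h n
        refine ⟨i + 1, ?_⟩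
        rw [hs_succ i, if_pos hPi]
        exact Nat.succ_le_succ (le_trans hn (hs_mono hin))
    obtain ⟨n, hn⟩ := hub N
    have := hsb n
    omega
  obtain ⟨M, hM⟩ := hstab
  refine ⟨M, fun i hi => ?_⟩
  obtain ⟨k, rfl⟩ := Nat.exists_eq_add_of_le hi
  clear hi
  induction k with
  | zero => rfl
  | succ k ih =>
    have heq : Ideal.span {a (M + k + 1)} = Ideal.span {a (M + k)} := by
      have h1 : ¬ P (M + k) := hM (M + k) (Nat.le_add_right _ _)
      simp only [hP, not_not] at h1
      exact le_antisymm h1 (hle (M + k))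
    rw [show M + (k + 1) = M + k + 1 by omega, heq, ih]
end

section
/- Let R be a commutative ring with 1 and τ a refinable symmetric relation on R#, with R τ-complete. If R is a τ-complete-BFR, then R is a τ-BFR: for every nonunit a there is a bound N(a) on the lengths of all τ-factorizations of a. -/
variable {R : Type*} [CommRing R]

/-- Split a `Forall₂` whose left list is an append. -/
lemma forall2_append_split {α β : Type*} {P : α → β → Prop} :
    ∀ (l₁ l₂ : List α) (m : List β), List.Forall₂ P (l₁ ++ l₂) m →
      ∃ m₁ m₂, m = m₁ ++ m₂ ∧ List.Forall₂ P l₁ m₁ ∧ List.Forall₂ P l₂ m₂ := by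
  intro l₁
  induction l₁ with
  | nil => intro l₂ m h; exact ⟨[], m, rfl, List.Forall₂.nil, h⟩
  | cons x l ih =>
    intro l₂ m h
    cases h with
    | cons hx h' =>
      obtain ⟨m₁, m₂, rfl, h₁, h₂⟩ := ih l₂ _ h'
      exact ⟨_ :: m₁, m₂, rfl, List.Forall₂.cons hx h₁, h₂⟩

/-- Group a refinement of a flattened list according to the blocks. -/
lemma forall2_flatten_group {α β : Type*} {P : α → β → Prop} :
    ∀ (L : List (List α)) (M : List β), List.Forall₂ P L.flatten M →
      ∃ Ms : List (List β), List.Forall₂ (fun li mi => List.Forall₂ P li mi) L Ms ∧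
        M = Ms.flatten := by
  intro L
  induction L with
  | nil =>
    intro M h
    rw [List.flatten_nil, List.forall₂_nil_left_iff] at h
    exact ⟨[], List.Forall₂.nil, by simp [h]⟩
  | cons l L ih =>
    intro M h
    rw [List.flatten_cons] at h
    obtain ⟨m₁, m₂, rfl, h₁, h₂⟩ := forall2_append_split _ _ _ h
    obtain ⟨Ms, hMs, rfl⟩ := ih _ h₂
    exact ⟨m₁ :: Ms, List.Forall₂.cons h₁ hMs, (List.flatten_cons ..).symm⟩

lemma choose_complete (τ : R → R → Prop)
    (hcompl : ∀ a : R, ¬ IsUnit a → ∃ l, IsTauComplete τ a l) :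
    ∀ l : List R, (∀ x ∈ l, ¬ IsUnit x) → ∃ C, List.Forall₂ (IsTauComplete τ) l C := by
  intro l
  induction l with
  | nil => intro _; exact ⟨[], List.Forall₂.nil⟩
  | cons x l ih =>
    intro h
    obtain ⟨C, hC⟩ := ih fun y hy => h y (List.mem_cons_of_mem _ hy)
    obtain ⟨c, hc⟩ := hcompl x (h x List.mem_cons_self)
    exact ⟨c :: C, List.Forall₂.cons hc hC⟩

lemma length_le_flatten (τ : R → R → Prop) :
    ∀ {l : List R} {C : List (List R)}, List.Forall₂ (IsTauFact τ) l C →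
      l.length ≤ C.flatten.length := by
  intro l C h
  induction h with
  | nil => simp
  | @cons x c l C hx _ ih =>
    rw [List.flatten_cons, List.length_append, List.length_cons]
    have : 1 ≤ c.length := by
      cases c with
      | nil => exact absurd rfl hx.1
      | cons y c => simp
    omega

lemma flatten_flatten_len (τ : R → R → Prop) (href : Refinable τ) :
    ∀ {xs : List R} {C : List (List R)} {Ms : List (List (List R))},
      List.Forall₂ (IsTauComplete τ) xs C →
      List.Forall₂ (fun li mi => List.Forall₂ (IsTauFact τ) li mi) C Ms →
      (Ms.flatten.flatten).length ≤ C.flatten.length := by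
  intro xs C Ms h1
  induction h1 generalizing Ms with
  | nil =>
    intro h2
    rw [List.forall₂_nil_left_iff] at h2
    simp [h2]
  | @cons x c xs C hx _ ih =>
    intro h2
    rw [List.forall₂_cons_left_iff] at h2
    obtain ⟨ms, Ms, hc, hC, rfl⟩ := h2
    · have hmsfact : IsTauFact τ x ms.flatten :=
        href x c ms.flatten hx.1 ⟨ms, hc, rfl⟩
      have hle : ms.flatten.length ≤ c.length := hx.2 ms.flatten ⟨ms, hc, rfl⟩ hmsfact
      have := ih hC
      simp only [List.flatten_cons, List.flatten_append, List.length_append]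
      omega

theorem stmt15 (τ : R → R → Prop) (hsym : Symmetric τ) (href : Refinable τ)
    (hcompl : ∀ a : R, ¬ IsUnit a → ∃ l, IsTauComplete τ a l)
    (hbfr : ∀ a : R, ¬ IsUnit a → ∃ N : ℕ, ∀ l, IsTauComplete τ a l → l.length ≤ N) :
    ∀ a : R, ¬ IsUnit a → ∃ N : ℕ, ∀ l, IsTauFact τ a l → l.length ≤ N := by
  intro a ha
  obtain ⟨N, hN⟩ := hbfr a ha
  refine ⟨N, fun l hl => ?_⟩
  -- choose a complete factorization of each factor
  obtain ⟨C, hC⟩ := choose_complete τ hcompl l hl.2.1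
  have hCfact : List.Forall₂ (IsTauFact τ) l C := List.Forall₂.imp (fun _ _ h => h.1) hC
  -- l' := C.flatten is a τ-factorization of a
  have hl' : IsTauFact τ a C.flatten := href a l C.flatten hl ⟨C, hCfact, rfl⟩
  -- and it is τ-complete
  have hcomp : IsTauComplete τ a C.flatten := by
    refine ⟨hl', fun m hm hmfact => ?_⟩
    obtain ⟨M, hM, rfl⟩ := hm
    obtain ⟨Ms, hMs, rfl⟩ := forall2_flatten_group C M hM
    exact flatten_flatten_len τ href hC hMs
  calc l.length ≤ C.flatten.length := length_le_flatten τ hCfact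
    _ ≤ N := hN _ hcomp
end

section
/- Let R be a commutative ring with 1 and τ a refinable symmetric relation on R#, with R τ-complete. If R is a τ-complete-β-FFR, then R is a τ-β-FFR: every nonunit has only finitely many τ-factorizations up to reordering and β. -/
variable {R : Type*} [CommRing R]

open List

theorem chunk_lemma {α β : Type*} (r : α → β → Prop) :
    ∀ (K : List (List α)) (L : List β), Forall₂ r K.flatten L →
      ∃ M : List (List β), Forall₂ (Forall₂ r) K M ∧ M.flatten = L := by
  intro K
  induction K with
  | nil => intro L h; simp only [flatten_nil, forall₂_nil_left_iff] at h
           exact ⟨[], Forall₂.nil, by simp [h]⟩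
  | cons k K ih =>
    intro L h
    simp only [flatten_cons] at h
    have h1 : Forall₂ r k (L.take k.length) := by
      have := forall₂_take k.length h
      rwa [take_left] at this
    have h2 : Forall₂ r K.flatten (L.drop k.length) := by
      have := forall₂_drop k.length h
      rwa [drop_left] at this
    obtain ⟨M, hM, hMf⟩ := ih _ h2
    exact ⟨L.take k.length :: M, Forall₂.cons h1 hM, by simp [hMf]⟩

theorem sublist_flatten_mono {α : Type*} {L₁ L₂ : List (List α)} (h : L₁.Sublist L₂) :
    L₁.flatten.Sublist L₂.flatten := by
  induction h with
  | slnil => exact Sublist.refl _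
  | cons a h ih => rw [flatten_cons]; exact ih.trans (sublist_append_right _ _)
  | cons_cons a h ih => simpa [flatten_cons] using Sublist.append (Sublist.refl a) ih

theorem forall₂_mem_right {α β : Type*} {r : α → β → Prop} :
    ∀ {l : List α} {m : List β}, Forall₂ r l m → ∀ y ∈ m, ∃ x, r x y := by
  intro l m h
  induction h with
  | nil => simp
  | cons hr _ ih => intro y hy; rcases mem_cons.mp hy with h | h
                    · exact ⟨_, h ▸ hr⟩
                    · exact ih y h

theorem prod_units :
    ∀ {k : List R} {M : List (List R)},
      Forall₂ (fun b m => ∃ u : Rˣ, b = (u : R) * m.prod) k M →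
      ∃ u : Rˣ, k.prod = u * M.flatten.prod := by
  intro k M h
  induction h with
  | nil => exact ⟨1, by simp⟩
  | @cons b m k M hr _ ih =>
    obtain ⟨u, hu⟩ := hr; obtain ⟨w, hw⟩ := ih
    refine ⟨u * w, ?_⟩
    simp only [prod_cons, flatten_cons, prod_append, hu, hw]
    push_cast
    ring

theorem span_prod :
    ∀ {u v : List R}, Forall₂ (fun x y : R => Ideal.span {x} = Ideal.span {y}) u v →
      Ideal.span {u.prod} = Ideal.span {v.prod} := by
  intro u v h
  induction h with
  | nil => rfl
  | @cons x y u v hr _ ih =>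
    simp only [prod_cons, ← Ideal.span_singleton_mul_span_singleton, hr, ih]

/-- The flatten of a refinement of a τ-factorization of `b` is a τ-factorization of `b`,
given that its elements are pairwise τ-related. -/
theorem flat_fact {τ : R → R → Prop} {b : R} {k : List R} {m : List (List R)}
    (hbk : IsTauFact τ b k) (hm : Forall₂ (IsTauFact τ) k m)
    (hp : m.flatten.Pairwise τ) : IsTauFact τ b m.flatten := by
  refine ⟨?_, ?_, hp, ?_⟩
  · cases hm with
    | nil => exact absurd rfl hbk.1
    | cons hr h =>
      rename_i x k' blk m'
      rw [flatten_cons]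
      intro hnil
      rcases append_eq_nil_iff.mp hnil with ⟨h1, _⟩
      exact hr.1 h1
  · intro x hx
    rcases mem_flatten.mp hx with ⟨blk, hblk, hxblk⟩
    obtain ⟨y, hy⟩ := forall₂_mem_right hm blk hblk
    exact hy.2.1 x hxblk
  · obtain ⟨v, hv⟩ := hbk.2.2.2
    obtain ⟨w, hw⟩ := prod_units (hm.imp (fun h => h.2.2.2 : ∀ {a : R} {b : List R}, IsTauFact _ a b → _))
    exact ⟨v * w, by rw [hv, hw]; push_cast; ring⟩

theorem bound_lemma {τ : R → R → Prop} :
    ∀ {K : List (List R)} {M : List (List (List R))} {ls : List R},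
      Forall₂ (IsTauComplete τ) ls K → Forall₂ (Forall₂ (IsTauFact τ)) K M →
      (M.flatten.flatten).Pairwise τ → M.flatten.flatten.length ≤ K.flatten.length := by
  intro K M ls h1 h2 hp
  induction h1 generalizing M with
  | nil => obtain rfl := forall₂_nil_left_iff.mp h2; simp
  | @cons b k ls' K' hbk _ ih =>
    rcases forall₂_cons_left_iff.mp h2 with ⟨m, M', hkm, hKM, rfl⟩
    simp only [flatten_cons, flatten_append, pairwise_append] at hp
    rcases hp with ⟨hp1, hp2, _⟩
    have hfact : IsTauFact τ b m.flatten := flat_fact hbk.1 hkm hp1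
    have hlen : m.flatten.length ≤ k.length := hbk.2 m.flatten ⟨m, hkm, rfl⟩ hfact
    have := ih hKM hp2
    simp only [flatten_cons, flatten_append, length_append]
    omega

theorem exists_forall₂' {α β : Type*} {r : α → β → Prop} :
    ∀ {l : List α}, (∀ a ∈ l, ∃ b, r a b) → ∃ m, Forall₂ r l m := by
  intro l
  induction l with
  | nil => exact fun _ => ⟨[], Forall₂.nil⟩
  | cons a l ih =>
    intro h
    obtain ⟨b, hb⟩ := h a mem_cons_self
    obtain ⟨m, hm⟩ := ih (fun x hx => h x (mem_cons_of_mem a hx))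
    exact ⟨b :: m, Forall₂.cons hb hm⟩

theorem forall₂_comp' {α β γ : Type*} {p : α → β → Prop} {q : β → γ → Prop} :
    ∀ {l : List α} {m : List β} {n : List γ}, Forall₂ p l m → Forall₂ q m n →
      Forall₂ (fun a c => ∃ b, p a b ∧ q b c) l n := by
  intro l m n h1 h2
  induction h1 generalizing n with
  | nil => obtain rfl := forall₂_nil_left_iff.mp h2; exact Forall₂.nil
  | cons hp _ ih =>
    rcases forall₂_cons_left_iff.mp h2 with ⟨c, n', hq, hn, rfl⟩
    exact Forall₂.cons ⟨_, hp, hq⟩ (ih hn)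

theorem stmt16 (τ : R → R → Prop) (hsym : Symmetric τ) (href : Refinable τ)
    (hcompl : ∀ a : R, ¬ IsUnit a → ∃ l, IsTauComplete τ a l)
    (hffr : ∀ a : R, ¬ IsUnit a → ∃ S : Set (List R), S.Finite ∧
      ∀ l, IsTauComplete τ a l → ∃ m ∈ S, AssocListEq l m) :
    ∀ a : R, ¬ IsUnit a → ∃ S : Set (List R), S.Finite ∧
      ∀ l, IsTauFact τ a l → 2 ≤ l.length → ∃ m ∈ S, AssocListEq l m := by
  intro a ha
  obtain ⟨S0, hS0fin, hS0⟩ := hffr a ha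
  refine ⟨⋃ m₀ ∈ S0, ⋃ q ∈ {x | x ∈ m₀.permutations},
      Set.range (fun c : Composition q.length => (q.splitWrtComposition c).map List.prod),
    hS0fin.biUnion (fun m₀ _ => (List.finite_toSet _).biUnion (fun q _ => Set.finite_range _)),
    ?_⟩
  intro l hl _
  obtain ⟨K, hK⟩ := exists_forall₂' (r := IsTauComplete τ)
    (fun b hb => hcompl b (hl.2.1 b hb))
  have hrefl' : IsRefinement τ l K.flatten := ⟨K, hK.imp (fun _ _ h => h.1), rfl⟩
  have hl' : IsTauFact τ a K.flatten := href a l K.flatten hl hrefl'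
  have hcomp : IsTauComplete τ a K.flatten := by
    refine ⟨hl', ?_⟩
    rintro l'' ⟨L', hL', rfl⟩ hfact''
    obtain ⟨M, hM, rfl⟩ := chunk_lemma _ K L' hL'
    exact bound_lemma hK hM hfact''.2.2.1
  obtain ⟨m₀, hm₀S, m', hperm, hsp⟩ := hS0 K.flatten hcomp
  obtain ⟨M', hM', rfl⟩ := chunk_lemma _ K m' hsp
  have hcomb : Forall₂ (fun b blk => ∃ k, IsTauComplete τ b k ∧
      Forall₂ (fun x y : R => Ideal.span {x} = Ideal.span {y}) k blk) l M' :=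
    forall₂_comp' hK hM'
  have hpos : ∀ n ∈ M'.map length, 0 < n := by
    intro n hn
    rcases mem_map.mp hn with ⟨blk, hblk, rfl⟩
    obtain ⟨b, k, hk, hkb⟩ := forall₂_mem_right hcomb blk hblk
    have := hkb.length_eq
    have hkne : k ≠ [] := hk.1.1
    cases k with
    | nil => exact absurd rfl hkne
    | cons x xs => simp at this; omega
  have hsum : (M'.map length).sum = M'.flatten.length := length_flatten.symm
  refine ⟨M'.map List.prod, ?_, M'.map List.prod, Perm.refl _, ?_⟩
  · refine Set.mem_biUnion hm₀S ?_
    refine Set.mem_biUnion (show M'.flatten ∈ {x | x ∈ m₀.permutations} from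
      mem_permutations.mpr hperm.symm) ?_
    refine ⟨⟨M'.map length, fun hi => hpos _ hi, hsum⟩, ?_⟩
    show map prod (M'.flatten.splitWrtComposition _) = map prod M'
    rw [splitWrtComposition_flatten M' _ rfl]
  · rw [forall₂_map_right_iff]
    refine hcomb.imp ?_
    rintro b blk ⟨k, hk, hkb⟩
    have h1 : Ideal.span {b} = Ideal.span ({k.prod} : Set R) := by
      obtain ⟨u, hu⟩ := hk.1.2.2.2
      rw [hu, Ideal.span_singleton_mul_left_unit u.isUnit]
    exact h1.trans (span_prod hkb)
end

section
/- Let R = ℤ and τ = {(±2,±2), (±3,±3), (±4,±9), (±9,±4)} (all sign combinations). Then the factorization 36 = 4·9 is a τ-complete factorization, yet neither 4 nor 9 is τ-irreducible (τ-atomic). -/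
variable {R : Type*} [CommRing R]

/-- The relation τ = {(±2,±2), (±3,±3), (±4,±9), (±9,±4)} on ℤ. -/
def tauZ : ℤ → ℤ → Prop := fun x y =>
  (x.natAbs = 2 ∧ y.natAbs = 2) ∨ (x.natAbs = 3 ∧ y.natAbs = 3) ∨
  (x.natAbs = 4 ∧ y.natAbs = 9) ∨ (x.natAbs = 9 ∧ y.natAbs = 4)

lemma natAbs_list_prod (l : List ℤ) : l.prod.natAbs = (l.map Int.natAbs).prod := by
  induction l with
  | nil => simp
  | cons a t ih => simp [Int.natAbs_mul, ih]

lemma prod_natAbs_eq {a : ℤ} {l : List ℤ} (h : ∃ u : ℤˣ, a = u * l.prod) :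
    l.prod.natAbs = a.natAbs := by
  obtain ⟨u, rfl⟩ := h
  rcases Int.units_eq_one_or u with rfl | rfl <;> simp [Int.natAbs_mul]

lemma len_one_of_all_eq {l : List ℤ} {k : ℕ} (hk : 2 ≤ k)
    (h : ∀ b ∈ l, b.natAbs = k) (hp : l.prod.natAbs = k) : l.length = 1 := by
  have : (l.map Int.natAbs).prod = k ^ l.length := by
    rw [List.prod_eq_pow_card _ k (by simpa using h)]
    simp
  rw [natAbs_list_prod, this] at hp
  have := Nat.pow_right_injective hk (hp.trans (pow_one k).symm)
  simpa using this

theorem stmt19 :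
    IsTauComplete tauZ (36 : ℤ) [4, 9] ∧
    ¬ (∀ l, IsTauFact tauZ (4 : ℤ) l →
        ∃ b ∈ l, Ideal.span {(4 : ℤ)} = Ideal.span {b}) ∧
    ¬ (∀ l, IsTauFact tauZ (9 : ℤ) l →
        ∃ b ∈ l, Ideal.span {(9 : ℤ)} = Ideal.span {b}) := by
  refine ⟨⟨⟨by simp, ?_, ?_, ⟨1, by norm_num⟩⟩, ?_⟩, ?_, ?_⟩
  · intro b hb
    simp only [List.mem_cons, List.mem_singleton] at hb
    rcases hb with rfl | rfl | h
    · simp [Int.isUnit_iff]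
    · simp [Int.isUnit_iff]
    · simp at h
  · norm_num [tauZ]
  · rintro l' ⟨L, hF, rfl⟩ hfact'
    rcases hF with _ | ⟨h4, hF2⟩
    rcases hF2 with _ | ⟨h9, hF3⟩
    cases hF3
    rename_i L1 L2
    have p1 : L1.prod.natAbs = 4 := prod_natAbs_eq h4.2.2.2
    have p2 : L2.prod.natAbs = 9 := prod_natAbs_eq h9.2.2.2
    have hdvd1 : ∀ b ∈ L1, b.natAbs ∣ 4 := by
      intro b hb
      rw [← p1]; exact Int.natAbs_dvd_natAbs.mpr (List.dvd_prod hb)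
    have hdvd2 : ∀ b ∈ L2, b.natAbs ∣ 9 := by
      intro b hb
      rw [← p2]; exact Int.natAbs_dvd_natAbs.mpr (List.dvd_prod hb)
    have hpair : (L1 ++ L2).Pairwise tauZ := by
      have := hfact'.2.2.1
      simpa using this
    have hcross : ∀ a ∈ L1, ∀ b ∈ L2, tauZ a b :=
      (List.pairwise_append.mp hpair).2.2
    obtain ⟨b0, hb0⟩ := List.exists_mem_of_ne_nil _ h9.1
    obtain ⟨a0, ha0⟩ := List.exists_mem_of_ne_nil _ h4.1
    have hL1 : ∀ a ∈ L1, a.natAbs = 4 := by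
      intro a ha
      have ht := hcross a ha b0 hb0
      have d1 := hdvd1 a ha
      have d2 := hdvd2 b0 hb0
      rcases ht with ⟨_, hb⟩ | ⟨ha', _⟩ | ⟨ha', _⟩ | ⟨ha', _⟩
      · rw [hb] at d2; exact absurd d2 (by decide)
      · rw [ha'] at d1; exact absurd d1 (by decide)
      · exact ha'
      · rw [ha'] at d1; exact absurd d1 (by decide)
    have hL2 : ∀ b ∈ L2, b.natAbs = 9 := by
      intro b hb
      have ht := hcross a0 ha0 b hb
      have d1 := hdvd1 a0 ha0
      have d2 := hdvd2 b hb
      rcases ht with ⟨_, hb'⟩ | ⟨ha', _⟩ | ⟨_, hb'⟩ | ⟨_, hb'⟩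
      · rw [hb'] at d2; exact absurd d2 (by decide)
      · rw [ha'] at d1; exact absurd d1 (by decide)
      · exact hb'
      · rw [hb'] at d2; exact absurd d2 (by decide)
    have len1 : L1.length = 1 := len_one_of_all_eq (by norm_num) hL1 p1
    have len2 : L2.length = 1 := len_one_of_all_eq (by norm_num) hL2 p2
    simp [len1, len2]
  · intro h
    obtain ⟨b, hb, hspan⟩ := h [2, 2]
      ⟨by simp, by
        intro b hb
        simp only [List.mem_cons, List.mem_singleton] at hb
        rcases hb with rfl | rfl | h' <;> simp_all [Int.isUnit_iff],
        by norm_num [tauZ], ⟨1, by norm_num⟩⟩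
    simp only [List.mem_cons, List.mem_singleton] at hb
    have : Associated (4 : ℤ) b := (Ideal.span_singleton_eq_span_singleton).mp hspan
    rw [Int.associated_iff_natAbs] at this
    rcases hb with rfl | rfl | h' <;> simp_all
  · intro h
    obtain ⟨b, hb, hspan⟩ := h [3, 3]
      ⟨by simp, by
        intro b hb
        simp only [List.mem_cons, List.mem_singleton] at hb
        rcases hb with rfl | rfl | h' <;> simp_all [Int.isUnit_iff],
        by norm_num [tauZ], ⟨1, by norm_num⟩⟩
    simp only [List.mem_cons, List.mem_singleton] at hb
    have : Associated (9 : ℤ) b := (Ideal.span_singleton_eq_span_singleton).mp hspan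
    rw [Int.associated_iff_natAbs] at this
    rcases hb with rfl | rfl | h' <;> simp_all
end
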